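/- Let (H, B) be a cocommutative Rota-Baxter Hopf algebra with descendent product g∘_B h := g₍₁₎·B(g₍₂₎)·h·S(B(g₍₃₎)). Then B is multiplicative from (H, ∘_B) to (H, ·): B(g∘_B h) = B(g)·B(h) for all g,h ∈ H; moreover B is also a Rota-Baxter operator on the Hopf algebra H_B = (H, ∘_B, 1, Δ, ε, T). -/

import Mathlib

open scoped TensorProduct
open Coalgebra

variable (R H : Type*) [CommRing R] [AddCommGroup H] [Module R H] [Coalgebra R H]

/-- A Hopf algebra structure (multiplication, unit, antipode) on the coalgebra `H`:
the multiplication is associative with unit, comultiplication and counit are algebra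
maps, and `S` is an antipode (expressed via arbitrary Sweedler representations). -/
structure HopfMul where
  mul : H →ₗ[R] H →ₗ[R] H
  one : H
  S : H →ₗ[R] H
  mul_assoc : ∀ a b c : H, mul (mul a b) c = mul a (mul b c)
  one_mul : ∀ a : H, mul one a = a
  mul_one : ∀ a : H, mul a one = a
  comul_mul : ∀ (a b : H) {ιa : Type*} (ra : Coalgebra.Repr R a ιa) {ιb : Type*} (rb : Coalgebra.Repr R b ιb),
    comul (R := R) (mul a b) = ∑ i ∈ ra.index, ∑ j ∈ rb.index,
      mul (ra.left i) (rb.left j) ⊗ₜ[R] mul (ra.right i) (rb.right j)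
  comul_one : comul (R := R) one = one ⊗ₜ[R] one
  counit_mul : ∀ a b : H, counit (R := R) (mul a b) = counit (R := R) a * counit (R := R) b
  counit_one : counit (R := R) one = 1
  S_mul_left : ∀ (a : H) {ι : Type*} (r : Coalgebra.Repr R a ι),
    ∑ i ∈ r.index, mul (S (r.left i)) (r.right i) = counit (R := R) a • one
  S_mul_right : ∀ (a : H) {ι : Type*} (r : Coalgebra.Repr R a ι),
    ∑ i ∈ r.index, mul (r.left i) (S (r.right i)) = counit (R := R) a • one

/-- Cocommutativity of the coalgebra `H`. -/
def Cocomm : Prop :=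
  ∀ a : H, TensorProduct.comm R H H (comul (R := R) a) = comul (R := R) a

/-- A Rota-Baxter operator on the (cocommutative) Hopf algebra `(H, h)`: a coalgebra
homomorphism `B` satisfying `B(a)B(b) = B(a₍₁₎·B(a₍₂₎)·b·S(B(a₍₃₎)))`. -/
structure RotaBaxter (h : HopfMul R H) where
  B : H →ₗ[R] H
  comul_B : ∀ (a : H) {ι : Type*} (r : Coalgebra.Repr R a ι),
    comul (R := R) (B a) = ∑ i ∈ r.index, B (r.left i) ⊗ₜ[R] B (r.right i)
  counit_B : ∀ a : H, counit (R := R) (B a) = counit (R := R) a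
  rb : ∀ (a b : H) {ι : Type*} (r : Coalgebra.Repr R a ι)
      {ι2 : ι → Type*} (r2 : ∀ i : ι, Coalgebra.Repr R (r.right i) (ι2 i)),
    h.mul (B a) (B b) = ∑ i ∈ r.index, ∑ j ∈ (r2 i).index,
      B (h.mul (h.mul (h.mul (r.left i) (B ((r2 i).left j))) b)
        (h.S (B ((r2 i).right j))))

section RBAux0

variable {R H}

universe u v

/-- Lift a Sweedler representation to an arbitrary universe for its index type. -/
noncomputable def rbReprLift {a : H} {ι : Type*} (r : Coalgebra.Repr R a ι) :
    Coalgebra.Repr R a (ULift.{u} (Fin r.index.card)) :=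
  ⟨(Finset.univ : Finset (ULift.{u} (Fin r.index.card))),
    fun i => r.left (r.index.equivFin.symm i.down),
    fun i => r.right (r.index.equivFin.symm i.down), by
      calc (∑ i : ULift.{u} (Fin r.index.card),
              r.left (r.index.equivFin.symm i.down) ⊗ₜ[R] r.right (r.index.equivFin.symm i.down))
          = ∑ x : {x // x ∈ r.index}, r.left x.1 ⊗ₜ[R] r.right x.1 :=
            Fintype.sum_equiv (Equiv.ulift.trans r.index.equivFin.symm) _ _ (fun i => rfl)
        _ = ∑ x ∈ r.index.attach, r.left x.1 ⊗ₜ[R] r.right x.1 := by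
            rw [Finset.univ_eq_attach]
        _ = ∑ i ∈ r.index, r.left i ⊗ₜ[R] r.right i := Finset.sum_attach r.index (fun i => r.left i ⊗ₜ[R] r.right i)
        _ = CoalgebraStruct.comul a := r.eq⟩

/-- A one-level Sweedler sum of a linear expression only depends on `comul a`. -/
lemma rbOneLevel {M : Type*} [AddCommGroup M] [Module R M] (Φ : H ⊗[R] H →ₗ[R] M)
    (a : H) {ι : Type*} (r : Coalgebra.Repr R a ι) :
    ∑ i ∈ r.index, Φ (r.left i ⊗ₜ[R] r.right i) = Φ (CoalgebraStruct.comul (R := R) a) := by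
  rw [← r.eq, map_sum]

/-- The canonical "two-level" comultiplication `(1 ⊗ Δ) ∘ Δ`. -/
noncomputable def rbD2 : H →ₗ[R] H ⊗[R] (H ⊗[R] H) :=
  LinearMap.lTensor H CoalgebraStruct.comul ∘ₗ CoalgebraStruct.comul

/-- A two-level Sweedler sum of a linear expression only depends on `rbD2 a`. -/
lemma rbTwoLevel {M : Type*} [AddCommGroup M] [Module R M]
    (Φ : H ⊗[R] (H ⊗[R] H) →ₗ[R] M) (a : H) {ι : Type*} (r : Coalgebra.Repr R a ι)
    {ι2 : ι → Type*} (r2 : ∀ i : ι, Coalgebra.Repr R (r.right i) (ι2 i)) :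
    ∑ i ∈ r.index, ∑ j ∈ (r2 i).index,
      Φ (r.left i ⊗ₜ[R] ((r2 i).left j ⊗ₜ[R] (r2 i).right j)) = Φ (rbD2 a) := by
  have hΔ : rbD2 (R := R) a
      = ∑ i ∈ r.index, ∑ j ∈ (r2 i).index,
        r.left i ⊗ₜ[R] ((r2 i).left j ⊗ₜ[R] (r2 i).right j) := by
    rw [rbD2, LinearMap.comp_apply, ← r.eq, map_sum]
    refine Finset.sum_congr rfl fun i _ => ?_
    rw [LinearMap.lTensor_tmul, ← (r2 i).eq, TensorProduct.tmul_sum]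
  rw [hΔ, map_sum]
  exact Finset.sum_congr rfl fun i _ => by rw [map_sum]

end RBAux0
section RBAux

variable {R H}

/-- Convolution product on `End(H)` induced by `h.mul` and `comul`. -/
noncomputable def rbConv (h : HopfMul R H) (f g : H →ₗ[R] H) : H →ₗ[R] H :=
  TensorProduct.lift h.mul ∘ₗ TensorProduct.map f g ∘ₗ CoalgebraStruct.comul

lemma rbConv_repr (h : HopfMul R H) (f g : H →ₗ[R] H) (a : H) {ι : Type*} (r : Coalgebra.Repr R a ι) :
    rbConv h f g a = ∑ i ∈ r.index, h.mul (f (r.left i)) (g (r.right i)) := by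
  simp [rbConv, ← r.eq, map_sum]

/-- Convolution unit. -/
noncomputable def rbUnit (h : HopfMul R H) : H →ₗ[R] H :=
  LinearMap.toSpanSingleton R H h.one ∘ₗ CoalgebraStruct.counit

lemma rbUnit_apply (h : HopfMul R H) (a : H) :
    rbUnit h a = counit (R := R) a • h.one := rfl

lemma sum_counit_smul (a : H) {ι : Type*} (r : Coalgebra.Repr R a ι) :
    ∑ i ∈ r.index, counit (R := R) (r.left i) • r.right i = a := by
  have h1 := Coalgebra.sum_counit_tmul_eq (R := R) r
  have h2 : (TensorProduct.lid R H) (∑ i ∈ r.index, counit (R := R) (r.left i) ⊗ₜ[R] r.right i)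
      = (TensorProduct.lid R H) ((1 : R) ⊗ₜ[R] a) := by rw [h1]
  simp only [map_sum, TensorProduct.lid_tmul, one_smul] at h2
  exact h2

lemma sum_smul_counit (a : H) {ι : Type*} (r : Coalgebra.Repr R a ι) :
    ∑ i ∈ r.index, counit (R := R) (r.right i) • r.left i = a := by
  have h1 := Coalgebra.sum_tmul_counit_eq (R := R) r
  have h2 : (TensorProduct.rid R H) (∑ i ∈ r.index, r.left i ⊗ₜ[R] counit (R := R) (r.right i))
      = (TensorProduct.rid R H) (a ⊗ₜ[R] (1 : R)) := by rw [h1]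
  simp only [map_sum, TensorProduct.rid_tmul, one_smul] at h2
  exact h2

lemma rbConv_unit_left (h : HopfMul R H) (f : H →ₗ[R] H) : rbConv h (rbUnit h) f = f := by
  ext a
  rw [rbConv_repr h _ _ a (ℛ R a)]
  have e1 : ∀ i ∈ (ℛ R a).index,
      h.mul (rbUnit h ((ℛ R a).left i)) (f ((ℛ R a).right i))
        = counit (R := R) ((ℛ R a).left i) • f ((ℛ R a).right i) := by
    intro i _
    rw [rbUnit_apply, map_smul, LinearMap.smul_apply, h.one_mul]
  rw [Finset.sum_congr rfl e1]
  calc ∑ i ∈ (ℛ R a).index, counit (R := R) ((ℛ R a).left i) • f ((ℛ R a).right i)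
      = f (∑ i ∈ (ℛ R a).index, counit (R := R) ((ℛ R a).left i) • (ℛ R a).right i) := by
        rw [map_sum]; simp [map_smul]
    _ = f a := by rw [_root_.sum_counit_smul]

lemma rbConv_unit_right (h : HopfMul R H) (f : H →ₗ[R] H) : rbConv h f (rbUnit h) = f := by
  ext a
  rw [rbConv_repr h _ _ a (ℛ R a)]
  have e1 : ∀ i ∈ (ℛ R a).index,
      h.mul (f ((ℛ R a).left i)) (rbUnit h ((ℛ R a).right i))
        = counit (R := R) ((ℛ R a).right i) • f ((ℛ R a).left i) := by
    intro i _
    rw [rbUnit_apply, map_smul, h.mul_one]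
  rw [Finset.sum_congr rfl e1]
  calc ∑ i ∈ (ℛ R a).index, counit (R := R) ((ℛ R a).right i) • f ((ℛ R a).left i)
      = f (∑ i ∈ (ℛ R a).index, counit (R := R) ((ℛ R a).right i) • (ℛ R a).left i) := by
        rw [map_sum]; simp [map_smul]
    _ = f a := by rw [sum_smul_counit]

end RBAux
section RBAux2

variable {R H}

lemma rbCocomm_sum {M : Type*} [AddCommGroup M] [Module R M] (hc : Cocomm R H)
    (Φ : H ⊗[R] H →ₗ[R] M) (a : H) {ι : Type*} (r : Coalgebra.Repr R a ι) :
    ∑ i ∈ r.index, Φ (r.left i ⊗ₜ[R] r.right i)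
      = ∑ i ∈ r.index, Φ (r.right i ⊗ₜ[R] r.left i) := by
  have h1 := hc a
  rw [← r.eq, map_sum] at h1
  simp only [TensorProduct.comm_tmul] at h1
  have h2 := congrArg Φ h1
  simp only [map_sum] at h2
  exact h2.symm

lemma rbCoassoc_sum {M : Type*} [AddCommGroup M] [Module R M]
    (Φ : H ⊗[R] (H ⊗[R] H) →ₗ[R] M) (a : H) {ι : Type*} (r : Coalgebra.Repr R a ι)
    {κ : ι → Type*} (rL : ∀ i : ι, Coalgebra.Repr R (r.left i) (κ i))
    {Λ : ι → Type*} (rR : ∀ i : ι, Coalgebra.Repr R (r.right i) (Λ i)) :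
    ∑ i ∈ r.index, ∑ j ∈ (rL i).index,
        Φ ((rL i).left j ⊗ₜ[R] ((rL i).right j ⊗ₜ[R] r.right i))
      = ∑ i ∈ r.index, ∑ j ∈ (rR i).index,
        Φ (r.left i ⊗ₜ[R] ((rR i).left j ⊗ₜ[R] (rR i).right j)) := by
  have h1 := congrArg Φ (Coalgebra.sum_tmul_tmul_eq (R := R) r rL rR)
  simpa only [map_sum] using h1

lemma rbConv_assoc (h : HopfMul R H) (f g k : H →ₗ[R] H) :
    rbConv h (rbConv h f g) k = rbConv h f (rbConv h g k) := by
  ext a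
  set r := ℛ R a with hr
  set Φ : H ⊗[R] (H ⊗[R] H) →ₗ[R] H :=
    TensorProduct.lift h.mul ∘ₗ
      TensorProduct.map f (TensorProduct.lift h.mul ∘ₗ TensorProduct.map g k) with hΦ
  have hΦt : ∀ x y z : H, Φ (x ⊗ₜ[R] (y ⊗ₜ[R] z)) = h.mul (f x) (h.mul (g y) (k z)) := by
    intro x y z; simp [hΦ]
  calc rbConv h (rbConv h f g) k a
      = ∑ i ∈ r.index, h.mul (rbConv h f g (r.left i)) (k (r.right i)) :=
        rbConv_repr h _ _ a r
    _ = ∑ i ∈ r.index, ∑ j ∈ (ℛ R (r.left i)).index,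
          Φ ((ℛ R (r.left i)).left j ⊗ₜ[R] ((ℛ R (r.left i)).right j ⊗ₜ[R] r.right i)) := by
        refine Finset.sum_congr rfl fun i _ => ?_
        rw [rbConv_repr h f g _ (ℛ R (r.left i)), map_sum, LinearMap.sum_apply]
        refine Finset.sum_congr rfl fun j _ => ?_
        rw [hΦt, h.mul_assoc]
    _ = ∑ i ∈ r.index, ∑ j ∈ (ℛ R (r.right i)).index,
          Φ (r.left i ⊗ₜ[R] ((ℛ R (r.right i)).left j ⊗ₜ[R] (ℛ R (r.right i)).right j)) :=
        rbCoassoc_sum Φ a r _ _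
    _ = ∑ i ∈ r.index, h.mul (f (r.left i)) (rbConv h g k (r.right i)) := by
        refine Finset.sum_congr rfl fun i _ => ?_
        rw [rbConv_repr h g k _ (ℛ R (r.right i)), map_sum]
        refine Finset.sum_congr rfl fun j _ => ?_
        rw [hΦt]
    _ = rbConv h f (rbConv h g k) a := (rbConv_repr h _ _ a r).symm

end RBAux2
section RBAux3

variable {R H}

/-- Auxiliary map comultiplying the middle tensor factor. -/
noncomputable def rbPsi : H ⊗[R] (H ⊗[R] H) →ₗ[R] H ⊗[R] (H ⊗[R] (H ⊗[R] H)) :=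
  TensorProduct.map LinearMap.id
    ((TensorProduct.assoc R H H H).toLinearMap ∘ₗ
      TensorProduct.map CoalgebraStruct.comul LinearMap.id)

lemma rbPsi_eval (x v ρ : H) {ι : Type*} (rv : Coalgebra.Repr R v ι) :
    rbPsi (x ⊗ₜ[R] (v ⊗ₜ[R] ρ))
      = ∑ k ∈ rv.index, x ⊗ₜ[R] (rv.left k ⊗ₜ[R] (rv.right k ⊗ₜ[R] ρ)) := by
  have hv : (CoalgebraStruct.comul (R := R) v) = ∑ k ∈ rv.index, rv.left k ⊗ₜ[R] rv.right k :=
    rv.eq.symm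
  simp [rbPsi, hv, TensorProduct.sum_tmul, TensorProduct.tmul_sum, map_sum]

lemma rbFourLeg_eq (a : H) {ι : Type*} (r : Coalgebra.Repr R a ι)
    {κ : ι → Type*} (rL : ∀ i : ι, Coalgebra.Repr R (r.left i) (κ i))
    {κ2 : ∀ i, κ i → Type*} (rLL : ∀ (i : ι) (j : κ i), Coalgebra.Repr R ((rL i).right j) (κ2 i j))
    {Λ : ι → Type*} (rR : ∀ i : ι, Coalgebra.Repr R (r.right i) (Λ i))
    {Λ2 : ∀ i, Λ i → Type*} (rRR : ∀ (i : ι) (j : Λ i), Coalgebra.Repr R ((rR i).right j) (Λ2 i j)) :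
    (∑ i ∈ r.index, ∑ j ∈ (rL i).index, ∑ k ∈ (rLL i j).index,
      (rL i).left j ⊗ₜ[R] ((rLL i j).left k ⊗ₜ[R] ((rLL i j).right k ⊗ₜ[R] r.right i))) =
    ∑ i ∈ r.index, ∑ j ∈ (rR i).index, ∑ k ∈ (rRR i j).index,
      r.left i ⊗ₜ[R] ((rR i).left j ⊗ₜ[R] ((rRR i j).left k ⊗ₜ[R] (rRR i j).right k)) := by
  classical
  set rc : ∀ (i : ι) (j : Λ i), Coalgebra.Repr R ((rR i).left j) (H × H) :=
    fun i j => ℛ R _ with hrc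
  have base := Coalgebra.sum_tmul_tmul_eq (R := R) r rL rR
  have E1 := congrArg (rbPsi (R := R) (H := H)) base
  simp only [map_sum] at E1
  have EL : ∑ i ∈ r.index, ∑ j ∈ (rL i).index,
      rbPsi ((rL i).left j ⊗ₜ[R] ((rL i).right j ⊗ₜ[R] r.right i))
      = ∑ i ∈ r.index, ∑ j ∈ (rL i).index, ∑ k ∈ (rLL i j).index,
        (rL i).left j ⊗ₜ[R] ((rLL i j).left k ⊗ₜ[R] ((rLL i j).right k ⊗ₜ[R] r.right i)) :=
    Finset.sum_congr rfl fun i _ => Finset.sum_congr rfl fun j _ =>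
      rbPsi_eval ((rL i).left j) ((rL i).right j) (r.right i) (rLL i j)
  have ER : ∑ i ∈ r.index, ∑ j ∈ (rR i).index,
      rbPsi (r.left i ⊗ₜ[R] ((rR i).left j ⊗ₜ[R] (rR i).right j))
      = ∑ i ∈ r.index, ∑ j ∈ (rR i).index, ∑ k ∈ (rc i j).index,
        r.left i ⊗ₜ[R] ((rc i j).left k ⊗ₜ[R] ((rc i j).right k ⊗ₜ[R] (rR i).right j)) :=
    Finset.sum_congr rfl fun i _ => Finset.sum_congr rfl fun j _ =>
      rbPsi_eval (r.left i) ((rR i).left j) ((rR i).right j) (rc i j)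
  rw [EL, ER] at E1
  rw [E1]
  refine Finset.sum_congr rfl fun i _ => ?_
  have base2 := Coalgebra.sum_tmul_tmul_eq (R := R) (rR i) (rc i) (rRR i)
  have h2 := congrArg (TensorProduct.mk R H (H ⊗[R] (H ⊗[R] H)) (r.left i)) base2
  simpa only [map_sum, TensorProduct.mk_apply] using h2

lemma rbFourLeg_sum {M : Type*} [AddCommGroup M] [Module R M]
    (Φ : H ⊗[R] (H ⊗[R] (H ⊗[R] H)) →ₗ[R] M) (a : H) {ι : Type*} (r : Coalgebra.Repr R a ι)
    {κ : ι → Type*} (rL : ∀ i : ι, Coalgebra.Repr R (r.left i) (κ i))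
    {κ2 : ∀ i, κ i → Type*} (rLL : ∀ (i : ι) (j : κ i), Coalgebra.Repr R ((rL i).right j) (κ2 i j))
    {Λ : ι → Type*} (rR : ∀ i : ι, Coalgebra.Repr R (r.right i) (Λ i))
    {Λ2 : ∀ i, Λ i → Type*} (rRR : ∀ (i : ι) (j : Λ i), Coalgebra.Repr R ((rR i).right j) (Λ2 i j)) :
    (∑ i ∈ r.index, ∑ j ∈ (rL i).index, ∑ k ∈ (rLL i j).index,
      Φ ((rL i).left j ⊗ₜ[R] ((rLL i j).left k ⊗ₜ[R] ((rLL i j).right k ⊗ₜ[R] r.right i)))) =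
    ∑ i ∈ r.index, ∑ j ∈ (rR i).index, ∑ k ∈ (rRR i j).index,
      Φ (r.left i ⊗ₜ[R] ((rR i).left j ⊗ₜ[R] ((rRR i j).left k ⊗ₜ[R] (rRR i j).right k))) := by
  have h1 := congrArg Φ (rbFourLeg_eq a r rL rLL rR rRR)
  simpa only [map_sum] using h1

lemma rbSwap34 {M : Type*} [AddCommGroup M] [Module R M] (hc : Cocomm R H)
    (Φ : H ⊗[R] (H ⊗[R] (H ⊗[R] H)) →ₗ[R] M) (a : H) {ι : Type*} (r : Coalgebra.Repr R a ι)
    {Λ : ι → Type*} (rR : ∀ i : ι, Coalgebra.Repr R (r.right i) (Λ i))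
    {Λ2 : ∀ i, Λ i → Type*} (rRR : ∀ (i : ι) (j : Λ i), Coalgebra.Repr R ((rR i).right j) (Λ2 i j)) :
    (∑ i ∈ r.index, ∑ j ∈ (rR i).index, ∑ k ∈ (rRR i j).index,
      Φ (r.left i ⊗ₜ[R] ((rR i).left j ⊗ₜ[R] ((rRR i j).left k ⊗ₜ[R] (rRR i j).right k)))) =
    ∑ i ∈ r.index, ∑ j ∈ (rR i).index, ∑ k ∈ (rRR i j).index,
      Φ (r.left i ⊗ₜ[R] ((rR i).left j ⊗ₜ[R] ((rRR i j).right k ⊗ₜ[R] (rRR i j).left k))) := by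
  refine Finset.sum_congr rfl fun i _ => Finset.sum_congr rfl fun j _ => ?_
  have := rbCocomm_sum hc
    (Φ ∘ₗ TensorProduct.mk R H (H ⊗[R] (H ⊗[R] H)) (r.left i) ∘ₗ
      TensorProduct.mk R H (H ⊗[R] H) ((rR i).left j)) _ (rRR i j)
  simpa only [LinearMap.comp_apply, TensorProduct.mk_apply] using this

end RBAux3
section RBAux4

variable {R H}

/-- Evaluator for the descendent product: `x ⊗ (y ⊗ z) ↦ x · B(y) · ξ · S(B(z))`. -/
noncomputable def rbCircPhi (h : HopfMul R H) (rb : RotaBaxter R H h) (ξ : H) :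
    H ⊗[R] (H ⊗[R] H) →ₗ[R] H :=
  TensorProduct.lift h.mul ∘ₗ TensorProduct.map LinearMap.id
    (TensorProduct.lift h.mul ∘ₗ TensorProduct.map rb.B (h.mul ξ ∘ₗ (h.S ∘ₗ rb.B)))

lemma rbCircPhi_eval (h : HopfMul R H) (rb : RotaBaxter R H h) (ξ x y z : H) :
    rbCircPhi h rb ξ (x ⊗ₜ[R] (y ⊗ₜ[R] z))
      = h.mul (h.mul (h.mul x (rb.B y)) ξ) (h.S (rb.B z)) := by
  simp [rbCircPhi, h.mul_assoc]

lemma rbCirc_eq_phi (h : HopfMul R H) (rb : RotaBaxter R H h) (circB : H → H → H)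
    (hcirc : ∀ (g k : H) {ι : Type*} (r : Coalgebra.Repr R g ι)
        {ι2 : ι → Type*} (r2 : ∀ i : ι, Coalgebra.Repr R (r.right i) (ι2 i)),
      circB g k = ∑ i ∈ r.index, ∑ j ∈ (r2 i).index,
        h.mul (h.mul (h.mul (r.left i) (rb.B ((r2 i).left j))) k)
          (h.S (rb.B ((r2 i).right j)))) (g k : H) :
    circB g k = rbCircPhi h rb k (rbD2 g) := by
  rw [hcirc g k (rbReprLift (ℛ R g)) (fun i => rbReprLift (ℛ R _)),
    ← rbTwoLevel (rbCircPhi h rb k) g (rbReprLift (ℛ R g)) (fun i => rbReprLift (ℛ R _))]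
  exact Finset.sum_congr rfl fun i _ => Finset.sum_congr rfl fun j _ =>
    (rbCircPhi_eval h rb k _ _ _).symm

lemma rbRB_eq_phi (h : HopfMul R H) (rb : RotaBaxter R H h) (a b : H) :
    h.mul (rb.B a) (rb.B b) = rb.B (rbCircPhi h rb b (rbD2 a)) := by
  rw [rb.rb a b (rbReprLift (ℛ R a)) (fun i => rbReprLift (ℛ R _))]
  have key := rbTwoLevel (rb.B ∘ₗ rbCircPhi h rb b) a (rbReprLift (ℛ R a))
    (fun i => rbReprLift (ℛ R _))
  simp only [LinearMap.comp_apply] at key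
  rw [← key]
  exact Finset.sum_congr rfl fun i _ => Finset.sum_congr rfl fun j _ =>
    congrArg rb.B (rbCircPhi_eval h rb b _ _ _).symm

lemma rbClaim1 (h : HopfMul R H) (rb : RotaBaxter R H h) (circB : H → H → H)
    (hcirc : ∀ (g k : H) {ι : Type*} (r : Coalgebra.Repr R g ι)
        {ι2 : ι → Type*} (r2 : ∀ i : ι, Coalgebra.Repr R (r.right i) (ι2 i)),
      circB g k = ∑ i ∈ r.index, ∑ j ∈ (r2 i).index,
        h.mul (h.mul (h.mul (r.left i) (rb.B ((r2 i).left j))) k)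
          (h.S (rb.B ((r2 i).right j)))) :
    ∀ g k : H, rb.B (circB g k) = h.mul (rb.B g) (rb.B k) := by
  intro g k
  rw [rbCirc_eq_phi h rb circB hcirc g k, rbRB_eq_phi h rb g k]

lemma rbComulB {h : HopfMul R H} (rb : RotaBaxter R H h) (a : H) :
    CoalgebraStruct.comul (R := R) (rb.B a)
      = TensorProduct.map rb.B rb.B (CoalgebraStruct.comul (R := R) a) := by
  rw [rb.comul_B a (rbReprLift (ℛ R a)),
    ← rbOneLevel (TensorProduct.map rb.B rb.B) a (rbReprLift (ℛ R a))]
  exact Finset.sum_congr rfl fun i _ => by simp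

/-- Image of a Sweedler representation under the coalgebra morphism `B`. -/
noncomputable def rbReprB {h : HopfMul R H} (rb : RotaBaxter R H h) {a : H}
    {ι : Type*} (r : Coalgebra.Repr R a ι) : Coalgebra.Repr R (rb.B a) ι :=
  ⟨r.index, fun i => rb.B (r.left i), fun i => rb.B (r.right i), by
    rw [rbComulB rb a, ← r.eq, map_sum]
    exact Finset.sum_congr rfl fun i _ => by simp⟩

lemma rbIdS_comul (h : HopfMul R H) (a : H) :
    (TensorProduct.lift h.mul ∘ₗ TensorProduct.map LinearMap.id h.S)
        (CoalgebraStruct.comul (R := R) a) = counit (R := R) a • h.one := by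
  rw [← rbOneLevel (TensorProduct.lift h.mul ∘ₗ TensorProduct.map LinearMap.id h.S)
    a (rbReprLift (ℛ R a)), ← h.S_mul_right a (rbReprLift (ℛ R a))]
  exact Finset.sum_congr rfl fun i _ => by simp

lemma rbSId_comul (h : HopfMul R H) (a : H) :
    (TensorProduct.lift h.mul ∘ₗ TensorProduct.map h.S LinearMap.id)
        (CoalgebraStruct.comul (R := R) a) = counit (R := R) a • h.one := by
  rw [← rbOneLevel (TensorProduct.lift h.mul ∘ₗ TensorProduct.map h.S LinearMap.id)
    a (rbReprLift (ℛ R a)), ← h.S_mul_left a (rbReprLift (ℛ R a))]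
  exact Finset.sum_congr rfl fun i _ => by simp

lemma rbConv_B_SB (h : HopfMul R H) (rb : RotaBaxter R H h) :
    rbConv h rb.B (h.S ∘ₗ rb.B) = rbUnit h := by
  ext a
  have e1 : TensorProduct.map rb.B (h.S ∘ₗ rb.B)
      = (TensorProduct.map LinearMap.id h.S) ∘ₗ TensorProduct.map rb.B rb.B := by
    rw [← TensorProduct.map_comp, LinearMap.id_comp]
  calc rbConv h rb.B (h.S ∘ₗ rb.B) a
      = (TensorProduct.lift h.mul ∘ₗ TensorProduct.map LinearMap.id h.S)
          (CoalgebraStruct.comul (R := R) (rb.B a)) := by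
        rw [rbComulB rb a]
        simp [rbConv, e1]
    _ = counit (R := R) (rb.B a) • h.one := rbIdS_comul h (rb.B a)
    _ = rbUnit h a := by rw [rb.counit_B, rbUnit_apply]

lemma rbConv_SB_B (h : HopfMul R H) (rb : RotaBaxter R H h) :
    rbConv h (h.S ∘ₗ rb.B) rb.B = rbUnit h := by
  ext a
  have e1 : TensorProduct.map (h.S ∘ₗ rb.B) rb.B
      = (TensorProduct.map h.S LinearMap.id) ∘ₗ TensorProduct.map rb.B rb.B := by
    rw [← TensorProduct.map_comp, LinearMap.id_comp]
  calc rbConv h (h.S ∘ₗ rb.B) rb.B a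
      = (TensorProduct.lift h.mul ∘ₗ TensorProduct.map h.S LinearMap.id)
          (CoalgebraStruct.comul (R := R) (rb.B a)) := by
        rw [rbComulB rb a]
        simp [rbConv, e1]
    _ = counit (R := R) (rb.B a) • h.one := rbSId_comul h (rb.B a)
    _ = rbUnit h a := by rw [rb.counit_B, rbUnit_apply]

universe w

/-- The trivial representation of `comul 1 = 1 ⊗ 1` (universe polymorphic). -/
noncomputable def rbROne (h : HopfMul R H) : Coalgebra.Repr R h.one PUnit.{w+1} :=
  ⟨({PUnit.unit} : Finset PUnit.{w+1}), fun _ => h.one, fun _ => h.one, by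
    simpa using h.comul_one.symm⟩

@[simp] lemma rbROne_index (h : HopfMul R H) :
    (rbROne (R := R) h).index = ({PUnit.unit} : Finset PUnit) := rfl
@[simp] lemma rbROne_left (h : HopfMul R H) (i : PUnit) :
    (rbROne (R := R) h).left i = h.one := rfl
@[simp] lemma rbROne_right (h : HopfMul R H) (i : PUnit) :
    (rbROne (R := R) h).right i = h.one := rfl

lemma rbBone (h : HopfMul R H) (rb : RotaBaxter R H h) : rb.B h.one = h.one := by
  have e2 : h.mul (rb.B h.one) (h.S (rb.B h.one)) = h.one := by
    have key := rbIdS_comul h (rb.B h.one)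
    rw [rbComulB rb h.one, h.comul_one] at key
    rw [rb.counit_B, h.counit_one, one_smul] at key
    simpa using key
  have e3 : h.mul (h.S (rb.B h.one)) (rb.B h.one) = h.one := by
    have key := rbSId_comul h (rb.B h.one)
    rw [rbComulB rb h.one, h.comul_one] at key
    rw [rb.counit_B, h.counit_one, one_smul] at key
    simpa using key
  have idem : h.mul (rb.B h.one) (rb.B h.one) = rb.B h.one := by
    have key := rb.rb h.one h.one (rbROne h) (fun _ => rbROne h)
    simp only [rbROne_index, rbROne_left, rbROne_right, Finset.sum_singleton] at key
    rw [h.one_mul, h.mul_one] at key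
    rw [key, e2]
  calc rb.B h.one = h.mul h.one (rb.B h.one) := (h.one_mul _).symm
    _ = h.mul (h.mul (h.S (rb.B h.one)) (rb.B h.one)) (rb.B h.one) := by rw [e3]
    _ = h.mul (h.S (rb.B h.one)) (h.mul (rb.B h.one) (rb.B h.one)) := h.mul_assoc _ _ _
    _ = h.mul (h.S (rb.B h.one)) (rb.B h.one) := by rw [idem]
    _ = h.one := e3

end RBAux4
section RBAux5

variable {R H}

@[simp] lemma rbReprB_index {h : HopfMul R H} (rb : RotaBaxter R H h) {a : H}
    {ι : Type*} (r : Coalgebra.Repr R a ι) : (rbReprB rb r).index = r.index := rfl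
@[simp] lemma rbReprB_left {h : HopfMul R H} (rb : RotaBaxter R H h) {a : H}
    {ι : Type*} (r : Coalgebra.Repr R a ι) (i : r.ι) : (rbReprB rb r).left i = rb.B (r.left i) := rfl
@[simp] lemma rbReprB_right {h : HopfMul R H} (rb : RotaBaxter R H h) {a : H}
    {ι : Type*} (r : Coalgebra.Repr R a ι) (i : r.ι) : (rbReprB rb r).right i = rb.B (r.right i) := rfl

/-- The antipode `T` of the descendent Hopf algebra, as a linear map. -/
noncomputable def rbT (h : HopfMul R H) (rb : RotaBaxter R H h) : H →ₗ[R] H :=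
  (TensorProduct.lift h.mul ∘ₗ
    TensorProduct.map (h.S ∘ₗ rb.B)
      (TensorProduct.lift h.mul ∘ₗ TensorProduct.map h.S rb.B)) ∘ₗ rbD2

lemma rbT_repr (h : HopfMul R H) (rb : RotaBaxter R H h) (a : H)
    {ι : Type*} (r : Coalgebra.Repr R a ι) {ι2 : ι → Type*} (r2 : ∀ i : ι, Coalgebra.Repr R (r.right i) (ι2 i)) :
    rbT h rb a = ∑ i ∈ r.index, ∑ j ∈ (r2 i).index,
      h.mul (h.mul (h.S (rb.B (r.left i))) (h.S ((r2 i).left j)))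
        (rb.B ((r2 i).right j)) := by
  have key := rbTwoLevel (TensorProduct.lift h.mul ∘ₗ
    TensorProduct.map (h.S ∘ₗ rb.B)
      (TensorProduct.lift h.mul ∘ₗ TensorProduct.map h.S rb.B)) a r r2
  rw [rbT, LinearMap.comp_apply, ← key]
  refine Finset.sum_congr rfl fun i _ => Finset.sum_congr rfl fun j _ => ?_
  simp [h.mul_assoc]

lemma rbT_conv (h : HopfMul R H) (rb : RotaBaxter R H h) :
    rbT h rb = rbConv h (h.S ∘ₗ rb.B) (rbConv h h.S rb.B) := by
  ext a
  rw [rbT_repr h rb a (ℛ R a) (fun i => ℛ R _), rbConv_repr h _ _ a (ℛ R a)]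
  refine Finset.sum_congr rfl fun i _ => ?_
  rw [rbConv_repr h h.S rb.B _ (ℛ R ((ℛ R a).right i)), map_sum]
  refine Finset.sum_congr rfl fun j _ => ?_
  simp [h.mul_assoc]

lemma rbYlem (h : HopfMul R H) (rb : RotaBaxter R H h) :
    rbConv h rb.B (rbConv h (rbT h rb) (h.S ∘ₗ rb.B)) = h.S := by
  rw [rbT_conv h rb]
  rw [rbConv_assoc h (h.S ∘ₗ rb.B) (rbConv h h.S rb.B) (h.S ∘ₗ rb.B)]
  rw [← rbConv_assoc h rb.B (h.S ∘ₗ rb.B)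
    (rbConv h (rbConv h h.S rb.B) (h.S ∘ₗ rb.B))]
  rw [rbConv_B_SB h rb, rbConv_unit_left]
  rw [rbConv_assoc h h.S rb.B (h.S ∘ₗ rb.B), rbConv_B_SB h rb, rbConv_unit_right]

lemma rbPkey (h : HopfMul R H) (hc : Cocomm R H) (rb : RotaBaxter R H h)
    (circB : H → H → H)
    (hcirc : ∀ (g k : H) {ι : Type*} (r : Coalgebra.Repr R g ι)
        {ι2 : ι → Type*} (r2 : ∀ i : ι, Coalgebra.Repr R (r.right i) (ι2 i)),
      circB g k = ∑ i ∈ r.index, ∑ j ∈ (r2 i).index,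
        h.mul (h.mul (h.mul (r.left i) (rb.B ((r2 i).left j))) k)
          (h.S (rb.B ((r2 i).right j))))
    (a : H) {ι : Type*} (r : Coalgebra.Repr R a ι) :
    ∑ i ∈ r.index, circB (r.left i) (rbT h rb (r.right i))
      = counit (R := R) a • h.one := by
  classical
  set Φ : H ⊗[R] (H ⊗[R] (H ⊗[R] H)) →ₗ[R] H :=
    TensorProduct.lift h.mul ∘ₗ TensorProduct.map LinearMap.id
      (TensorProduct.lift h.mul ∘ₗ TensorProduct.map rb.B
        (TensorProduct.lift h.mul.flip ∘ₗ
          TensorProduct.map (h.S ∘ₗ rb.B) (rbT h rb))) with hΦ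
  have ΦT : ∀ x y z w : H, Φ (x ⊗ₜ[R] (y ⊗ₜ[R] (z ⊗ₜ[R] w)))
      = h.mul x (h.mul (rb.B y) (h.mul (rbT h rb w) (h.S (rb.B z)))) := by
    intro x y z w; simp [hΦ]
  set rL : ∀ i : ι, Coalgebra.Repr R (r.left i) (H × H) := fun i => ℛ R _ with hrL
  set rLL : ∀ (i : ι) (j : H × H), Coalgebra.Repr R ((rL i).right j) (H × H) :=
    fun i j => ℛ R _ with hrLL
  set rR : ∀ i : ι, Coalgebra.Repr R (r.right i) (H × H) := fun i => ℛ R _ with hrR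
  set rRR : ∀ (i : ι) (j : H × H), Coalgebra.Repr R ((rR i).right j) (H × H) :=
    fun i j => ℛ R _ with hrRR
  have stepA : ∀ i ∈ r.index, circB (r.left i) (rbT h rb (r.right i))
      = ∑ j ∈ (rL i).index, ∑ k ∈ (rLL i j).index,
        Φ ((rL i).left j ⊗ₜ[R]
          ((rLL i j).left k ⊗ₜ[R] ((rLL i j).right k ⊗ₜ[R] r.right i))) := by
    intro i _
    rw [rbCirc_eq_phi h rb circB hcirc (r.left i) (rbT h rb (r.right i)),
      ← rbTwoLevel (rbCircPhi h rb (rbT h rb (r.right i))) (r.left i) (rL i) (rLL i)]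
    refine Finset.sum_congr rfl fun j _ => Finset.sum_congr rfl fun k _ => ?_
    rw [rbCircPhi_eval, ΦT]
    simp [h.mul_assoc]
  rw [Finset.sum_congr rfl stepA, rbFourLeg_sum Φ a r rL rLL rR rRR,
    rbSwap34 hc Φ a r rR rRR]
  have stepB : ∀ i ∈ r.index,
      (∑ j ∈ (rR i).index, ∑ k ∈ (rRR i j).index,
        Φ (r.left i ⊗ₜ[R]
          ((rR i).left j ⊗ₜ[R] ((rRR i j).right k ⊗ₜ[R] (rRR i j).left k))))
      = h.mul (r.left i) (h.S (r.right i)) := by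
    intro i _
    rw [← rbYlem h rb]
    rw [rbConv_repr h rb.B (rbConv h (rbT h rb) (h.S ∘ₗ rb.B)) (r.right i) (rR i),
      map_sum]
    refine Finset.sum_congr rfl fun j _ => ?_
    rw [rbConv_repr h (rbT h rb) (h.S ∘ₗ rb.B) _ (rRR i j), map_sum, map_sum]
    refine Finset.sum_congr rfl fun k _ => ?_
    rw [ΦT]
    simp
  rw [Finset.sum_congr rfl stepB]
  have fin : ∀ i ∈ r.index, h.mul (r.left i) (h.S (r.right i))
      = (TensorProduct.lift h.mul ∘ₗ TensorProduct.map LinearMap.id h.S)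
          (r.left i ⊗ₜ[R] r.right i) := by
    intro i _; simp
  rw [Finset.sum_congr rfl fin,
    rbOneLevel (TensorProduct.lift h.mul ∘ₗ TensorProduct.map LinearMap.id h.S) a r,
    rbIdS_comul h a]

end RBAux5
section RBAux6

variable {R H}

lemma rbT_eq (h : HopfMul R H) (rb : RotaBaxter R H h) (T : H → H)
    (hT : ∀ (g : H) {ι : Type*} (r : Coalgebra.Repr R g ι)
        {ι2 : ι → Type*} (r2 : ∀ i : ι, Coalgebra.Repr R (r.right i) (ι2 i)),
      T g = ∑ i ∈ r.index, ∑ j ∈ (r2 i).index,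
        h.mul (h.mul (h.S (rb.B (r.left i))) (h.S ((r2 i).left j)))
          (rb.B ((r2 i).right j))) :
    ∀ g, T g = rbT h rb g := by
  intro g
  exact (hT g (rbReprLift (ℛ R g)) (fun i => rbReprLift (ℛ R _))).trans
    (rbT_repr h rb g _ _).symm

lemma rbConv_B_BT (h : HopfMul R H) (hc : Cocomm R H) (rb : RotaBaxter R H h)
    (circB : H → H → H)
    (hcirc : ∀ (g k : H) {ι : Type*} (r : Coalgebra.Repr R g ι)
        {ι2 : ι → Type*} (r2 : ∀ i : ι, Coalgebra.Repr R (r.right i) (ι2 i)),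
      circB g k = ∑ i ∈ r.index, ∑ j ∈ (r2 i).index,
        h.mul (h.mul (h.mul (r.left i) (rb.B ((r2 i).left j))) k)
          (h.S (rb.B ((r2 i).right j)))) :
    rbConv h rb.B (rb.B ∘ₗ rbT h rb) = rbUnit h := by
  ext a
  rw [rbConv_repr h _ _ a (ℛ R a), rbUnit_apply]
  have e1 : ∀ i ∈ (ℛ R a).index,
      h.mul (rb.B ((ℛ R a).left i)) ((rb.B ∘ₗ rbT h rb) ((ℛ R a).right i))
        = rb.B (circB ((ℛ R a).left i) (rbT h rb ((ℛ R a).right i))) := by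
    intro i _
    rw [LinearMap.comp_apply]
    exact (rbClaim1 h rb circB hcirc _ _).symm
  rw [Finset.sum_congr rfl e1, ← map_sum,
    rbPkey h hc rb circB hcirc a (ℛ R a), map_smul, rbBone h rb]

lemma rbBT (h : HopfMul R H) (hc : Cocomm R H) (rb : RotaBaxter R H h)
    (circB : H → H → H)
    (hcirc : ∀ (g k : H) {ι : Type*} (r : Coalgebra.Repr R g ι)
        {ι2 : ι → Type*} (r2 : ∀ i : ι, Coalgebra.Repr R (r.right i) (ι2 i)),
      circB g k = ∑ i ∈ r.index, ∑ j ∈ (r2 i).index,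
        h.mul (h.mul (h.mul (r.left i) (rb.B ((r2 i).left j))) k)
          (h.S (rb.B ((r2 i).right j)))) :
    rb.B ∘ₗ rbT h rb = h.S ∘ₗ rb.B := by
  calc rb.B ∘ₗ rbT h rb
      = rbConv h (rbUnit h) (rb.B ∘ₗ rbT h rb) := (rbConv_unit_left h _).symm
    _ = rbConv h (rbConv h (h.S ∘ₗ rb.B) rb.B) (rb.B ∘ₗ rbT h rb) := by
        rw [rbConv_SB_B h rb]
    _ = rbConv h (h.S ∘ₗ rb.B) (rbConv h rb.B (rb.B ∘ₗ rbT h rb)) :=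
        rbConv_assoc h _ _ _
    _ = rbConv h (h.S ∘ₗ rb.B) (rbUnit h) := by
        rw [rbConv_B_BT h hc rb circB hcirc]
    _ = h.S ∘ₗ rb.B := rbConv_unit_right h _

end RBAux6

/-- For a cocommutative Rota-Baxter Hopf algebra: `B(g ∘_B h) = B(g)·B(h)`, and `B` is
again a Rota-Baxter operator on the descendent Hopf algebra `H_B = (H, ∘_B, T)`. -/
theorem rotaBaxter_B_multiplicative (h : HopfMul R H) (hc : Cocomm R H)
    (rb : RotaBaxter R H h) (circB : H → H → H) (T : H → H)
    (hcirc : ∀ (g k : H) {ι : Type*} (r : Coalgebra.Repr R g ι)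
        {ι2 : ι → Type*} (r2 : ∀ i : ι, Coalgebra.Repr R (r.right i) (ι2 i)),
      circB g k = ∑ i ∈ r.index, ∑ j ∈ (r2 i).index,
        h.mul (h.mul (h.mul (r.left i) (rb.B ((r2 i).left j))) k)
          (h.S (rb.B ((r2 i).right j))))
    (hT : ∀ (g : H) {ι : Type*} (r : Coalgebra.Repr R g ι)
        {ι2 : ι → Type*} (r2 : ∀ i : ι, Coalgebra.Repr R (r.right i) (ι2 i)),
      T g = ∑ i ∈ r.index, ∑ j ∈ (r2 i).index,
        h.mul (h.mul (h.S (rb.B (r.left i))) (h.S ((r2 i).left j)))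
          (rb.B ((r2 i).right j))) :
    (∀ g k : H, rb.B (circB g k) = h.mul (rb.B g) (rb.B k)) ∧
    (∀ (g k : H) {ι : Type*} (r : Coalgebra.Repr R g ι)
        {ι2 : ι → Type*} (r2 : ∀ i : ι, Coalgebra.Repr R (r.right i) (ι2 i)),
      circB (rb.B g) (rb.B k) = ∑ i ∈ r.index, ∑ j ∈ (r2 i).index,
        rb.B (circB (circB (circB (r.left i) (rb.B ((r2 i).left j))) k)
          (T (rb.B ((r2 i).right j))))) := by
  constructor
  · exact rbClaim1 h rb circB hcirc
  · intro g k _ r _ r2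
    have hBT : ∀ y : H, rb.B (T y) = h.S (rb.B y) := by
      intro y
      rw [rbT_eq h rb T hT y]
      have e := LinearMap.congr_fun (rbBT h hc rb circB hcirc) y
      simpa using e
    have eterm : ∀ i ∈ r.index, ∀ j ∈ (r2 i).index,
        rb.B (circB (circB (circB (r.left i) (rb.B ((r2 i).left j))) k)
            (T (rb.B ((r2 i).right j))))
          = rbCircPhi h rb (rb.B k)
              (rb.B (r.left i) ⊗ₜ[R]
                (rb.B ((r2 i).left j) ⊗ₜ[R] rb.B ((r2 i).right j))) := by
      intro i _ j _
      rw [rbClaim1 h rb circB hcirc, rbClaim1 h rb circB hcirc,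
        rbClaim1 h rb circB hcirc, hBT, rbCircPhi_eval]
    have key := rbTwoLevel (rbCircPhi h rb (rb.B k)) (rb.B g) (rbReprB rb r)
      (fun i => rbReprB rb (r2 i))
    simp only [rbReprB_index, rbReprB_left, rbReprB_right] at key
    calc circB (rb.B g) (rb.B k)
        = rbCircPhi h rb (rb.B k) (rbD2 (rb.B g)) :=
          rbCirc_eq_phi h rb circB hcirc (rb.B g) (rb.B k)
      _ = ∑ i ∈ r.index, ∑ j ∈ (r2 i).index,
            rbCircPhi h rb (rb.B k)
              (rb.B (r.left i) ⊗ₜ[R]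
                (rb.B ((r2 i).left j) ⊗ₜ[R] rb.B ((r2 i).right j))) := key.symm
      _ = ∑ i ∈ r.index, ∑ j ∈ (r2 i).index,
            rb.B (circB (circB (circB (r.left i) (rb.B ((r2 i).left j))) k)
              (T (rb.B ((r2 i).right j)))) :=
          Finset.sum_congr rfl fun i hi => Finset.sum_congr rfl fun j hj =>
            (eterm i hi j hj).symm
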